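/- arXiv:2407.21556 — 14 statements merged into one kernel-verified Lean document; each statement's English description precedes it below -/
import Mathlib

section
/- For any choice program P, the LPST operator is ⪯A_i-monotonic: if x1 ⊆ x2 and y2 ⊆ y1 (i.e. (x1,y1) ≤_i (x2,y2)) then HD^{LPST,l}_P(x1,y1) ⊆ HD^{LPST,l}_P(x2,y2), IC^{LPST,l}_P(x1,y1) ⪯S IC^{LPST,l}_P(x2,y2), and IC^{LPST,u}_P(x2,y2) ⪯H IC^{LPST,u}_P(x1,y1). -/
/-- A choice atom: a domain of atoms together with a family of satisfiers. -/
structure ChoiceAtom (A : Type*) where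
  dom : Set A
  sat : Set (Set A)

/-- A choice rule: a head choice atom and a finite list of body choice atoms. -/
structure ChoiceRule (A : Type*) where
  head : ChoiceAtom A
  body : List (ChoiceAtom A)

variable {A : Type*}

/-- `x` satisfies the choice atom `C` iff `x ∩ dom(C) ∈ sat(C)`. -/
def sats (x : Set A) (C : ChoiceAtom A) : Prop := x ∩ C.dom ∈ C.sat

/-- The rules of `P` whose bodies are all satisfied by `x`. -/
def applicable (P : Set (ChoiceRule A)) (x : Set A) : Set (ChoiceRule A) :=
  {r | r ∈ P ∧ ∀ Ci ∈ r.body, sats x Ci}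

/-- Heads of `x`-applicable rules. -/
def HD (P : Set (ChoiceRule A)) (x : Set A) : Set (ChoiceAtom A) :=
  {C | ∃ r ∈ applicable P x, r.head = C}

/-- Interpretations within the union of the domains of a set of heads that satisfy all heads. -/
def ICfrom (H : Set (ChoiceAtom A)) : Set (Set A) :=
  {z | z ⊆ (⋃ C ∈ H, C.dom) ∧ ∀ C ∈ H, sats z C}

/-- The immediate consequence operator for choice programs. -/
def ICP (P : Set (ChoiceRule A)) (x : Set A) : Set (Set A) := ICfrom (HD P x)

/-- Heads of rules whose bodies are satisfied by every `z` with `x ⊆ z ⊆ y`. -/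
def HDlpst (P : Set (ChoiceRule A)) (x y : Set A) : Set (ChoiceAtom A) :=
  {C | ∃ r ∈ P, r.head = C ∧ ∀ z : Set A, x ⊆ z → z ⊆ y → ∀ Ci ∈ r.body, sats z Ci}

/-- The lower bound of the LPST operator. -/
def IClpstL (P : Set (ChoiceRule A)) (x y : Set A) : Set (Set A) := ICfrom (HDlpst P x y)

/-- The upper bound of the LPST/MR operators, i.e. the ultimate lower/upper bound:
`⋃_{x ⊆ z ⊆ y} IC_P(z)`. -/
def ICuU (P : Set (ChoiceRule A)) (x y : Set A) : Set (Set A) :=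
  {w | ∃ z : Set A, x ⊆ z ∧ z ⊆ y ∧ w ∈ ICP P z}

/-- Heads of rules whose bodies are satisfied by `y` and by some `z ⊆ x`. -/
def HDmr (P : Set (ChoiceRule A)) (x y : Set A) : Set (ChoiceAtom A) :=
  {C | ∃ r ∈ P, r.head = C ∧ (∀ Ci ∈ r.body, sats y Ci) ∧
        ∃ z : Set A, z ⊆ x ∧ ∀ Ci ∈ r.body, sats z Ci}

/-- The lower bound of the MR operator. -/
def ICmrL (P : Set (ChoiceRule A)) (x y : Set A) : Set (Set A) := ICfrom (HDmr P x y)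

/-- Heads of rules s.t. `x ∩ dom(Ci) = y ∩ dom(Ci) ∈ sat(Ci)` for every body atom `Ci`. -/
def HDgz (P : Set (ChoiceRule A)) (x y : Set A) : Set (ChoiceAtom A) :=
  {C | ∃ r ∈ P, r.head = C ∧
        ∀ Ci ∈ r.body, x ∩ Ci.dom = y ∩ Ci.dom ∧ x ∩ Ci.dom ∈ Ci.sat}

/-- The lower (= upper) bound of the GZ operator. -/
def ICgzL (P : Set (ChoiceRule A)) (x y : Set A) : Set (Set A) := ICfrom (HDgz P x y)

/-- Smyth preorder on families of sets of atoms. -/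
def smyth (X Y : Set (Set A)) : Prop := ∀ y ∈ Y, ∃ x ∈ X, x ⊆ y

/-- Hoare preorder on families of sets of atoms. -/
def hoare (X Y : Set (Set A)) : Prop := ∀ x ∈ X, ∃ y ∈ Y, x ⊆ y

/-- The positive literal `a` as a choice atom `({a},{{a}})`. -/
def isPosLit (a : A) (C : ChoiceAtom A) : Prop := C.dom = {a} ∧ C.sat = {{a}}

/-- The negative literal `¬a` as a choice atom `({a},{∅})`. -/
def isNegLit (a : A) (C : ChoiceAtom A) : Prop := C.dom = {a} ∧ C.sat = {(∅ : Set A)}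

/-- A choice atom is a literal if it is a positive or negative literal. -/
def isLiteral (C : ChoiceAtom A) : Prop := ∃ a : A, isPosLit a C ∨ isNegLit a C

/-- A choice program is normal if all body atoms of all rules are literals. -/
def normalProgram (P : Set (ChoiceRule A)) : Prop :=
  ∀ r ∈ P, ∀ Ci ∈ r.body, isLiteral Ci

/-- `x` is a model of `P`. -/
def isModel (P : Set (ChoiceRule A)) (x : Set A) : Prop :=
  ∀ r ∈ P, (∀ Ci ∈ r.body, sats x Ci) → sats x r.head

/-- the LPST operator is `⪯A_i`-monotonic. -/
theorem lpst_Ai_monotonic (P : Set (ChoiceRule A)) (x1 y1 x2 y2 : Set A)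
    (hx : x1 ⊆ x2) (hy : y2 ⊆ y1) :
    HDlpst P x1 y1 ⊆ HDlpst P x2 y2 ∧
    smyth (IClpstL P x1 y1) (IClpstL P x2 y2) ∧
    hoare (ICuU P x2 y2) (ICuU P x1 y1) := by
  have hHD : HDlpst P x1 y1 ⊆ HDlpst P x2 y2 := by
    rintro C ⟨r, hrP, hhd, hall⟩
    exact ⟨r, hrP, hhd, fun z hz1 hz2 => hall z (hx.trans hz1) (hz2.trans hy)⟩
  refine ⟨hHD, ?_, ?_⟩
  · rintro w ⟨hwsub, hwsat⟩
    refine ⟨w ∩ (⋃ C ∈ HDlpst P x1 y1, C.dom), ⟨Set.inter_subset_right, ?_⟩,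
      Set.inter_subset_left⟩
    intro C hC
    have hdom : C.dom ⊆ ⋃ C ∈ HDlpst P x1 y1, C.dom := by
      intro a ha; exact Set.mem_biUnion hC ha
    have : (w ∩ (⋃ C ∈ HDlpst P x1 y1, C.dom)) ∩ C.dom = w ∩ C.dom := by
      rw [Set.inter_assoc, Set.inter_eq_self_of_subset_right hdom]
    unfold sats
    rw [this]
    exact hwsat C (hHD hC)
  · rintro w ⟨z, hz1, hz2, hw⟩
    exact ⟨w, ⟨z, hx.trans hz1, hz2.trans hy, hw⟩, subset_rfl⟩
end

section
/- For any choice program P, the ultimate operator is a non-deterministic approximation operator for IC_P: it is ⪯A_i-monotonic, i.e. if x1 ⊆ x2 and y2 ⊆ y1 then IC^{U,l}_P(x1,y1) ⪯S IC^{U,l}_P(x2,y2) and IC^{U,l}_P(x2,y2) ⪯H IC^{U,l}_P(x1,y1); and it is exact, i.e. IC^{U,l}_P(x,x) = IC_P(x) for every x ⊆ A. -/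
variable {A : Type*}

/-- the ultimate operator is an ndao for `IC_P`:
`⪯A_i`-monotonic and exact. -/
theorem ultimate_ndao (P : Set (ChoiceRule A)) :
    (∀ x1 y1 x2 y2 : Set A, x1 ⊆ x2 → y2 ⊆ y1 →
      smyth (ICuU P x1 y1) (ICuU P x2 y2) ∧ hoare (ICuU P x2 y2) (ICuU P x1 y1)) ∧
    (∀ x : Set A, ICuU P x x = ICP P x) := by
  constructor
  · intro x1 y1 x2 y2 hx hy
    have hsub : ICuU P x2 y2 ⊆ ICuU P x1 y1 := by
      rintro w ⟨z, hxz, hzy, hw⟩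
      exact ⟨z, hx.trans hxz, hzy.trans hy, hw⟩
    exact ⟨fun y hy' => ⟨y, hsub hy', subset_rfl⟩,
           fun x hx' => ⟨x, hsub hx', subset_rfl⟩⟩
  · intro x
    ext w
    constructor
    · rintro ⟨z, hxz, hzx, hw⟩
      rwa [Set.Subset.antisymm hzx hxz] at hw
    · intro hw
      exact ⟨x, subset_rfl, subset_rfl, hw⟩
end

section
/- For any choice program P and any y ⊆ A, the lower bound of the MR operator is Smyth-monotonic in its first argument: if x1 ⊆ x2 then HD^{MR,l}_P(x1,y) ⊆ HD^{MR,l}_P(x2,y) and IC^{MR,l}_P(x1,y) ⪯S IC^{MR,l}_P(x2,y). -/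
variable {A : Type*}

/-- the lower bound of the MR operator is Smyth-monotonic in its
first argument. -/
theorem mr_lower_smyth_monotonic (P : Set (ChoiceRule A)) (y x1 x2 : Set A)
    (h : x1 ⊆ x2) :
    HDmr P x1 y ⊆ HDmr P x2 y ∧ smyth (ICmrL P x1 y) (ICmrL P x2 y) := by
  have hHD : HDmr P x1 y ⊆ HDmr P x2 y := by
    rintro C ⟨r, hr, hh, hy, z, hz, hzs⟩
    exact ⟨r, hr, hh, hy, z, hz.trans h, hzs⟩
  refine ⟨hHD, ?_⟩
  rintro w ⟨hw, hws⟩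
  refine ⟨w ∩ (⋃ C ∈ HDmr P x1 y, C.dom), ⟨Set.inter_subset_right, ?_⟩,
    Set.inter_subset_left⟩
  intro C hC
  have hdom : C.dom ⊆ ⋃ C ∈ HDmr P x1 y, C.dom := by
    exact Set.subset_biUnion_of_mem hC
  have : w ∩ (⋃ C ∈ HDmr P x1 y, C.dom) ∩ C.dom = w ∩ C.dom := by
    rw [Set.inter_assoc, Set.inter_eq_right.mpr hdom]
  unfold sats
  rw [this]
  exact hws C (hHD hC)
end

section
/- For any choice program P, the GZ operator is ⪯A_i-monotonic when restricted to consistent pairs: if x1 ⊆ y1, x2 ⊆ y2, x1 ⊆ x2 and y2 ⊆ y1, then HD^{GZ,l}_P(x1,y1) ⊆ HD^{GZ,l}_P(x2,y2) and IC^{GZ,l}_P(x1,y1) ⪯S IC^{GZ,l}_P(x2,y2). -/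
variable {A : Type*}

/-- the GZ operator is `⪯A_i`-monotonic on consistent pairs. -/
theorem gz_Ai_monotonic (P : Set (ChoiceRule A)) (x1 y1 x2 y2 : Set A)
    (hc1 : x1 ⊆ y1) (hc2 : x2 ⊆ y2) (hx : x1 ⊆ x2) (hy : y2 ⊆ y1) :
    HDgz P x1 y1 ⊆ HDgz P x2 y2 ∧ smyth (ICgzL P x1 y1) (ICgzL P x2 y2) := by
  have hsub : HDgz P x1 y1 ⊆ HDgz P x2 y2 := by
    rintro C ⟨r, hr, hhd, hb⟩
    refine ⟨r, hr, hhd, fun Ci hCi => ?_⟩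
    obtain ⟨heq, hmem⟩ := hb Ci hCi
    have h1 : x1 ∩ Ci.dom ⊆ x2 ∩ Ci.dom := Set.inter_subset_inter_left _ hx
    have h2 : x2 ∩ Ci.dom ⊆ y2 ∩ Ci.dom := Set.inter_subset_inter_left _ hc2
    have h3 : y2 ∩ Ci.dom ⊆ y1 ∩ Ci.dom := Set.inter_subset_inter_left _ hy
    have hx2 : x2 ∩ Ci.dom = x1 ∩ Ci.dom :=
      Set.Subset.antisymm (heq ▸ (h2.trans h3)) h1
    have hy2 : y2 ∩ Ci.dom = x1 ∩ Ci.dom :=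
      Set.Subset.antisymm (heq ▸ h3) (h1.trans h2)
    exact ⟨hx2.trans hy2.symm, hx2 ▸ hmem⟩
  refine ⟨hsub, fun w hw => ?_⟩
  obtain ⟨hwsub, hwsat⟩ := hw
  refine ⟨w ∩ (⋃ C ∈ HDgz P x1 y1, C.dom), ⟨Set.inter_subset_right, fun C hC => ?_⟩,
    Set.inter_subset_left⟩
  have hdom : C.dom ⊆ ⋃ C ∈ HDgz P x1 y1, C.dom := Set.subset_biUnion_of_mem hC
  have : w ∩ (⋃ C ∈ HDgz P x1 y1, C.dom) ∩ C.dom = w ∩ C.dom := by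
    rw [Set.inter_assoc, Set.inter_eq_self_of_subset_right hdom]
  unfold sats
  rw [this]
  exact hwsat C (hsub hC)
end

section
/- For any normal choice program P and any x ⊆ y ⊆ A, HD^{MR,l}_P(x,y) = HD^{LPST,l}_P(x,y) and hence IC^{MR,l}_P(x,y) = IC^{LPST,l}_P(x,y); since the upper bounds coincide by definition, the MR and LPST operators coincide on normal choice programs. -/
variable {A : Type*}

/-- on normal choice programs the MR and LPST operators coincide. -/
theorem mr_eq_lpst_of_normal (P : Set (ChoiceRule A)) (hP : normalProgram P)
    (x y : Set A) (hxy : x ⊆ y) :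
    HDmr P x y = HDlpst P x y ∧ ICmrL P x y = IClpstL P x y := by
  have hHD : HDmr P x y = HDlpst P x y := by
    ext C
    constructor
    · rintro ⟨r, hrP, hhead, hy, z, hzx, hz⟩
      refine ⟨r, hrP, hhead, fun w hxw hwy Ci hCi => ?_⟩
      obtain ⟨a, hlit⟩ := hP r hrP Ci hCi
      rcases hlit with ⟨hdom, hsat⟩ | ⟨hdom, hsat⟩
      · -- positive literal: sats u Ci ↔ a ∈ u
        have key : ∀ u : Set A, sats u Ci ↔ a ∈ u := by
          intro u
          simp only [sats, hdom, hsat, Set.mem_singleton_iff]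
          constructor
          · intro h; have : a ∈ u ∩ {a} := by rw [h]; rfl
            exact this.1
          · intro h; ext b; simp [Set.mem_inter_iff]; rintro rfl; exact h
        have : a ∈ z := (key z).1 (hz Ci hCi)
        exact (key w).2 (hxw (hzx this))
      · -- negative literal: sats u Ci ↔ a ∉ u
        have key : ∀ u : Set A, sats u Ci ↔ a ∉ u := by
          intro u
          simp only [sats, hdom, hsat, Set.mem_singleton_iff]
          constructor
          · intro h ha; have : a ∈ u ∩ {a} := ⟨ha, rfl⟩
            rw [h] at this; exact this
          · intro h; ext b; simp [Set.mem_inter_iff]; rintro hb rfl; exact h hb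
        have : a ∉ y := (key y).1 (hy Ci hCi)
        exact (key w).2 fun hw => this (hwy hw)
    · rintro ⟨r, hrP, hhead, hall⟩
      exact ⟨r, hrP, hhead, hall y hxy le_rfl, x, le_rfl,
        hall x le_rfl hxy⟩
  exact ⟨hHD, by unfold ICmrL IClpstL; rw [hHD]⟩
end

section
/- Let P be a choice program in which the head of every rule is a monotone choice atom. Then x ⊆ A is a model of P if and only if there exists z ∈ IC_P(x) with z ⊆ x (i.e. IC_P(x) ⪯S {x}). -/
variable {A : Type*}

/-- A choice atom is monotone. -/
def monotoneAtom (C : ChoiceAtom A) : Prop :=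
  ∀ w w' : Set A, w ⊆ w' → w ∩ C.dom ∈ C.sat → w' ∩ C.dom ∈ C.sat

/-- for programs with monotone heads, models are exactly the `x`
with `IC_P(x) ⪯S {x}`, i.e. such that some `z ∈ IC_P(x)` satisfies `z ⊆ x`. -/
theorem model_iff_prefixpoint (P : Set (ChoiceRule A))
    (hmono : ∀ r ∈ P, monotoneAtom r.head) (x : Set A) :
    isModel P x ↔ ∃ z ∈ ICP P x, z ⊆ x := by
  constructor
  · intro hm
    refine ⟨x ∩ (⋃ C ∈ HD P x, C.dom), ⟨Set.inter_subset_right, ?_⟩, Set.inter_subset_left⟩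
    intro C hC
    have hsx : sats x C := by
      obtain ⟨r, hr, hrC⟩ := hC
      exact hrC ▸ hm r hr.1 hr.2
    have hdom : C.dom ⊆ ⋃ C ∈ HD P x, C.dom := by
      intro a ha; exact Set.mem_biUnion hC ha
    have : x ∩ (⋃ C ∈ HD P x, C.dom) ∩ C.dom = x ∩ C.dom := by
      rw [Set.inter_assoc, Set.inter_eq_right.mpr hdom]
    simpa [sats, this] using hsx
  · rintro ⟨z, ⟨_, hz⟩, hzx⟩ r hr hb
    have hC : r.head ∈ HD P x := ⟨r, ⟨hr, hb⟩, rfl⟩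
    exact hmono r hr z x hzx (hz r.head hC)
end

section
/- Let L be a complete lattice and O : L → Set L an operator with nonempty values that is Hoare-monotonic and upwards closed. Then every maximal post-fixpoint of O is a fixpoint of O: if x is a post-fixpoint and no post-fixpoint is strictly greater than x, then x ∈ O(x). -/
/-- for a Hoare-monotonic, upwards closed non-deterministic
operator with nonempty values on a complete lattice, every maximal
post-fixpoint is a fixpoint. -/
theorem maximal_postfixpoint_is_fixpoint {L : Type*} [CompleteLattice L]
    (O : L → Set L)
    (hne : ∀ u : L, (O u).Nonempty)
    (hmono : ∀ u v : L, u ≤ v → ∀ a ∈ O u, ∃ b ∈ O v, a ≤ b)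
    (hclosed : ∀ X : Set L, IsChain (· ≤ ·) X →
      (∀ u ∈ X, ∃ z ∈ O u, u ≤ z) → ∃ z ∈ O (sSup X), sSup X ≤ z)
    (x : L) (hpost : ∃ z ∈ O x, x ≤ z)
    (hmax : ∀ w : L, (∃ z ∈ O w, w ≤ z) → ¬ x < w) :
    x ∈ O x := by
  obtain ⟨z, hz, hxz⟩ := hpost
  obtain ⟨b, hb, hzb⟩ := hmono x z hxz z hz
  have : ¬ x < z := hmax z ⟨b, hb, hzb⟩
  have hxe : x = z := by by_contra h; exact this (lt_of_le_of_ne hxz h)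
  rw [hxe] at hz ⊢
  exact hz
end

section
/- Let L be a complete lattice and O : L → Set L an operator with nonempty values that is Hoare-monotonic and upwards closed. Then O admits a fixpoint: there exists x ∈ L with x ∈ O(x). -/
/-- every Hoare-monotonic, upwards closed non-deterministic
operator with nonempty values on a complete lattice admits a fixpoint. -/
theorem hoare_monotonic_has_fixpoint {L : Type*} [CompleteLattice L]
    (O : L → Set L)
    (hne : ∀ u : L, (O u).Nonempty)
    (hmono : ∀ u v : L, u ≤ v → ∀ a ∈ O u, ∃ b ∈ O v, a ≤ b)
    (hclosed : ∀ X : Set L, IsChain (· ≤ ·) X →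
      (∀ u ∈ X, ∃ z ∈ O u, u ≤ z) → ∃ z ∈ O (sSup X), sSup X ≤ z) :
    ∃ x : L, x ∈ O x := by
  set S : Set L := {u | ∃ z ∈ O u, u ≤ z} with hS
  obtain ⟨m, hm⟩ := zorn_le₀ S (by
    intro c hcs hc
    obtain ⟨z, hz, hsz⟩ := hclosed c hc (fun u hu => hcs hu)
    exact ⟨sSup c, ⟨z, hz, hsz⟩, fun x hx => le_sSup hx⟩)
  obtain ⟨z, hzO, hmz⟩ := hm.prop
  obtain ⟨b, hbO, hzb⟩ := hmono m z hmz z hzO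
  have hzS : z ∈ S := ⟨b, hbO, hzb⟩
  have : z = m := le_antisymm (hm.2 hzS hmz) hmz ▸ rfl
  exact ⟨m, this ▸ hzO⟩
end

section
/- For any choice program P, every s-grounded set is a-grounded: if x ⊆ A is s-grounded for P, then x is a-grounded for P. -/
variable {A : Type*}

/-- `z` is an `x`-trigger for rule `r`: `z ⊆ x` and every `w` with
`z ⊆ w ⊆ x` satisfies every body atom of `r`. -/
def isTrigger (x : Set A) (r : ChoiceRule A) (z : Set A) : Prop :=
  z ⊆ x ∧ ∀ w : Set A, z ⊆ w → w ⊆ x → ∀ Ci ∈ r.body, sats w Ci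

/-- `x` is d(omain)-grounded for `P`. -/
def dGrounded (P : Set (ChoiceRule A)) (x : Set A) : Prop :=
  ∃ κ : A → ℕ, ∀ a ∈ x, ∃ r ∈ P, a ∈ r.head.dom ∧
    ∀ b ∈ x, (∃ Ci ∈ r.body, b ∈ Ci.dom) → κ b < κ a

/-- `x` is s(trongly)-grounded for `P`. -/
def sGrounded (P : Set (ChoiceRule A)) (x : Set A) : Prop :=
  ∃ κ : A → ℕ, ∀ a ∈ x, ∃ r ∈ P, a ∈ r.head.dom ∧
    ∃ z : Set A, isTrigger x r z ∧ ∀ b ∈ z, κ b < κ a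

/-- `x` is a(ntecedent)-grounded for `P`. -/
def aGrounded (P : Set (ChoiceRule A)) (x : Set A) : Prop :=
  ∃ κ : A → ℕ, ∀ a ∈ x, ∃ r ∈ P, a ∈ r.head.dom ∧
    ∀ Ci ∈ r.body, ∃ z : Set A, z ⊆ {b ∈ x | κ b < κ a} ∧ sats z Ci

/-- every s-grounded set is a-grounded. -/
theorem sGrounded_aGrounded (P : Set (ChoiceRule A)) (x : Set A)
    (h : sGrounded P x) : aGrounded P x := by
  obtain ⟨κ, hκ⟩ := h
  refine ⟨κ, fun a ha => ?_⟩
  obtain ⟨r, hr, hd, z, ⟨hzx, htrig⟩, hlt⟩ := hκ a ha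
  exact ⟨r, hr, hd, fun Ci hCi =>
    ⟨z, fun b hb => ⟨hzx hb, hlt b hb⟩, htrig z subset_rfl hzx Ci hCi⟩⟩
end

section
/- Let P be a choice program, y ⊆ A, and ∅ = x_0 ⊆ x_1 ⊆ ⋯ ⊆ x_n a finite sequence with x_{i+1} ∈ IC^{GZ,l}_P(x_i, y) for every i < n and x_n ⊆ y. Then x_n is d-grounded for P. -/
variable {A : Type*}

/-- limits of well-founded sequences of the GZ lower bound are
d-grounded. -/
theorem gz_sequence_dGrounded (P : Set (ChoiceRule A)) (y : Set A) (n : ℕ)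
    (xs : ℕ → Set A) (h0 : xs 0 = ∅)
    (hmono : ∀ i < n, xs i ⊆ xs (i + 1))
    (hstep : ∀ i < n, xs (i + 1) ∈ ICgzL P (xs i) y)
    (hxy : xs n ⊆ y) :
    dGrounded P (xs n) := by
  classical
  refine ⟨fun a => sInf {i | a ∈ xs (i + 1)}, ?_⟩
  intro a ha
  set κ : A → ℕ := fun a => sInf {i | a ∈ xs (i + 1)} with hκ
  have hn : n ≠ 0 := by
    rintro rfl; rw [h0] at ha; exact ha.elim
  obtain ⟨m, rfl⟩ := Nat.exists_eq_succ_of_ne_zero hn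
  have hne : ({i | a ∈ xs (i + 1)} : Set ℕ).Nonempty := ⟨m, ha⟩
  have hmem : a ∈ xs (κ a + 1) := Nat.sInf_mem hne
  have hlt : κ a < m + 1 := Nat.lt_succ_of_le (Nat.sInf_le ha)
  obtain ⟨hsub, hsat⟩ := hstep (κ a) hlt
  have hmem' := hsub hmem
  simp only [Set.mem_iUnion] at hmem'
  obtain ⟨C, hC, haC⟩ := hmem'
  obtain ⟨r, hrP, hrhead, hbody⟩ := hC
  refine ⟨r, hrP, by rw [hrhead]; exact haC, ?_⟩
  rintro b hb ⟨Ci, hCi, hbCi⟩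
  have hby : b ∈ y := hxy hb
  obtain ⟨heq, -⟩ := hbody Ci hCi
  have hbx : b ∈ xs (κ a) := by
    have hmem2 : b ∈ y ∩ Ci.dom := ⟨hby, hbCi⟩
    rw [← heq] at hmem2; exact hmem2.1
  rcases Nat.eq_zero_or_pos (κ a) with h | h
  · rw [h, h0] at hbx; exact hbx.elim
  · obtain ⟨k, hk⟩ := Nat.exists_eq_succ_of_ne_zero h.ne'
    have hle : κ b ≤ k := Nat.sInf_le (show b ∈ xs (k + 1) by rw [show k + 1 = κ a from hk.symm]; exact hbx)
    omega
end

section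
/- Let P be a choice program, y ⊆ A, and ∅ = x_0 ⊆ x_1 ⊆ ⋯ ⊆ x_n a finite sequence with x_{i+1} ∈ IC^{LPST,l}_P(x_i, y) for every i < n and x_n ⊆ y. Then x_n is s-grounded for P. -/
variable {A : Type*}

/-- limits of well-founded sequences of the LPST lower bound are
s-grounded. -/
theorem lpst_sequence_sGrounded (P : Set (ChoiceRule A)) (y : Set A) (n : ℕ)
    (xs : ℕ → Set A) (h0 : xs 0 = ∅)
    (hmono : ∀ i < n, xs i ⊆ xs (i + 1))
    (hstep : ∀ i < n, xs (i + 1) ∈ IClpstL P (xs i) y)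
    (hxy : xs n ⊆ y) :
    sGrounded P (xs n) := by
  classical
  -- monotone chain up to n
  have chain : ∀ j, j ≤ n → ∀ i, i ≤ j → xs i ⊆ xs j := by
    intro j
    induction j with
    | zero => intro _ i hi; interval_cases i; exact subset_rfl
    | succ j ih =>
      intro hjn i hi
      rcases Nat.eq_or_lt_of_le hi with h | h
      · subst h; exact subset_rfl
      · exact (ih (Nat.le_of_succ_le hjn) i (Nat.lt_succ_iff.mp h)).trans
          (hmono j (Nat.lt_of_succ_le hjn))
  refine ⟨fun a => if h : ∃ i, a ∈ xs i then Nat.find h else 0, ?_⟩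
  intro a ha
  have hex : ∃ i, a ∈ xs i := ⟨n, ha⟩
  have hk : a ∈ xs (Nat.find hex) := Nat.find_spec hex
  have hkn : Nat.find hex ≤ n := Nat.find_le ha
  have hk0 : Nat.find hex ≠ 0 := by
    intro h; rw [h, h0] at hk; exact hk
  obtain ⟨m, hm⟩ : ∃ m, Nat.find hex = m + 1 := ⟨Nat.find hex - 1, (Nat.succ_pred_eq_of_pos (Nat.pos_of_ne_zero hk0)).symm⟩
  have hmn : m < n := by omega
  have hmem : a ∈ xs (m + 1) := by rw [← hm]; exact hk
  obtain ⟨hsub, -⟩ := hstep m hmn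
  have := hsub hmem
  simp only [Set.mem_iUnion, exists_prop] at this
  obtain ⟨C, hCH, haC⟩ := this
  obtain ⟨r, hrP, hrh, hbody⟩ := hCH
  refine ⟨r, hrP, by rw [hrh]; exact haC, xs m, ⟨chain n le_rfl m (by omega), ?_⟩, ?_⟩
  · intro w hw1 hw2 Ci hCi
    exact hbody w hw1 (hw2.trans hxy) Ci hCi
  · intro b hb
    show (if h : ∃ i, b ∈ xs i then Nat.find h else 0) < if h : ∃ i, a ∈ xs i then Nat.find h else 0
    have hbex : ∃ i, b ∈ xs i := ⟨m, hb⟩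
    have h1 : (if h : ∃ i, b ∈ xs i then Nat.find h else 0) ≤ m := by
      rw [dif_pos hbex]; exact Nat.find_le hb
    have h2 : (if h : ∃ i, a ∈ xs i then Nat.find h else 0) = m + 1 := by
      rw [dif_pos hex]; exact hm
    omega
end

section
/- Let P be a choice program, y ⊆ A, and ∅ = x_0 ⊆ x_1 ⊆ ⋯ ⊆ x_n a finite sequence with x_{i+1} ∈ IC^{MR,l}_P(x_i, y) for every i < n. Then x_n is a-grounded for P. -/
variable {A : Type*}

/-- limits of well-founded sequences of the MR lower bound are
a-grounded. -/
theorem mr_sequence_aGrounded (P : Set (ChoiceRule A)) (y : Set A) (n : ℕ)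
    (xs : ℕ → Set A) (h0 : xs 0 = ∅)
    (hmono : ∀ i < n, xs i ⊆ xs (i + 1))
    (hstep : ∀ i < n, xs (i + 1) ∈ ICmrL P (xs i) y) :
    aGrounded P (xs n) := by
  classical
  -- monotonicity up to n
  have mono : ∀ i j, i ≤ j → j ≤ n → xs i ⊆ xs j := by
    intro i j hij hjn
    induction j with
    | zero => simp [Nat.le_zero.mp hij]
    | succ k ih =>
      rcases Nat.lt_or_ge i (k+1) with h | h
      · exact (ih (Nat.lt_succ_iff.mp h) (le_trans (Nat.le_succ k) hjn)).trans
          (hmono k (Nat.lt_of_succ_le hjn))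
      · have : i = k + 1 := le_antisymm hij h
        simp [this]
  refine ⟨fun a => sInf {i | a ∈ xs i}, ?_⟩
  intro a ha
  have hne : ({i | a ∈ xs i} : Set ℕ).Nonempty := ⟨n, ha⟩
  set m := sInf {i | a ∈ xs i} with hmdef
  have hmem : a ∈ xs m := Nat.sInf_mem hne
  have hmn : m ≤ n := Nat.sInf_le ha
  have hm0 : m ≠ 0 := by
    intro h
    rw [h, h0] at hmem
    exact hmem
  obtain ⟨k, hk⟩ : ∃ k, m = k + 1 := ⟨m - 1, (Nat.succ_pred_eq_of_ne_zero hm0).symm⟩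
  have hkn : k < n := by omega
  obtain ⟨hsub, _hsat⟩ := hstep k hkn
  have : a ∈ ⋃ C ∈ HDmr P (xs k) y, C.dom := by
    apply hsub; rw [← hk]; exact hmem
  simp only [Set.mem_iUnion] at this
  obtain ⟨C, hC, haC⟩ := this
  obtain ⟨r, hrP, hrhd, _hy, z, hzsub, hzsat⟩ := hC
  refine ⟨r, hrP, by rw [hrhd]; exact haC, ?_⟩
  intro Ci hCi
  refine ⟨z, ?_, hzsat Ci hCi⟩
  intro b hb
  have hbk : b ∈ xs k := hzsub hb
  refine ⟨mono k n (le_of_lt hkn) le_rfl hbk, ?_⟩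
  have hle : sInf {i | b ∈ xs i} ≤ k := Nat.sInf_le hbk
  show sInf {i | b ∈ xs i} < sInf {i | a ∈ xs i}
  omega
end

section
/- Let P be a normal choice program in which every rule head is an atom, i.e. every rule has the form a ← a1,…,an,¬b1,…,¬bm (a normal logic program). If x ⊆ A is a-grounded for P, then x is grounded in the sense of Erdem and Lifschitz: there is κ : x → ℕ such that for every a ∈ x there is a rule a ← a1,…,an,¬b1,…,¬bm in P with ai ∈ x and κ(a) > κ(ai) for every i = 1,…,n. -/
variable {A : Type*}

/-- for normal logic programs (normal choice programs with atomic
heads), a-grounded sets are grounded in the sense of Erdem and Lifschitz. -/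
theorem aGrounded_erdem_lifschitz (P : Set (ChoiceRule A))
    (hP : normalProgram P)
    (hheads : ∀ r ∈ P, ∃ a : A, isPosLit a r.head)
    (x : Set A) (h : aGrounded P x) :
    ∃ κ : A → ℕ, ∀ a ∈ x, ∃ r ∈ P, a ∈ r.head.dom ∧
      ∀ Ci ∈ r.body, ∀ b : A, isPosLit b Ci → b ∈ x ∧ κ b < κ a := by
  obtain ⟨κ, hκ⟩ := h
  refine ⟨κ, fun a ha => ?_⟩
  obtain ⟨r, hrP, hdom, hbody⟩ := hκ a ha
  refine ⟨r, hrP, hdom, fun Ci hCi b hb => ?_⟩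
  obtain ⟨z, hz, hsat⟩ := hbody Ci hCi
  obtain ⟨hd, hs⟩ := hb
  have : z ∩ Ci.dom = {b} := by
    have := hsat
    simp only [sats, hs, Set.mem_singleton_iff] at this
    exact this
  have hbz : b ∈ z := by
    have : b ∈ z ∩ Ci.dom := this ▸ rfl
    exact this.1
  exact hz hbz
end

section
/- For any disjunctive normal logic program P and any x ⊆ y ⊆ A: IC^{d,l}_P(x,y) = IC^{MR,l}_{D2C(P)}(x,y) = IC^{LPST,l}_{D2C(P)}(x,y); i.e., the lower bound of the operator for disjunctive logic programs coincides with the lower bounds of the MR and LPST operators applied to the translation of P into a choice program. -/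
variable {A : Type*}

/-- A disjunctive normal rule: a nonempty set of head atoms, finite sets of
positive and negative body atoms. -/
structure DisjRule (A : Type*) where
  head : Set A
  hne : head.Nonempty
  pos : Finset A
  neg : Finset A

/-- Heads of rules of `P` whose positive body is contained in `x` and whose
negative body is disjoint from `y`. -/
def HDdl (P : Set (DisjRule A)) (x y : Set A) : Set (Set A) :=
  {Δ | ∃ r ∈ P, r.head = Δ ∧ (↑r.pos : Set A) ⊆ x ∧ ∀ b ∈ r.neg, b ∉ y}

/-- The lower bound of the ndao for disjunctive logic programs. -/
def ICdl (P : Set (DisjRule A)) (x y : Set A) : Set (Set A) :=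
  {z | z ⊆ (⋃ Δ ∈ HDdl P x y, Δ) ∧ ∀ Δ ∈ HDdl P x y, (z ∩ Δ).Nonempty}

/-- Translation of a disjunctive logic program into a choice program: each head
`Δ` becomes the choice atom `(Δ, {w ⊆ Δ | w ≠ ∅})`, each positive body atom `a`
becomes `({a},{{a}})` and each negative body atom `b` becomes `({b},{∅})`. -/
def D2C (P : Set (DisjRule A)) : Set (ChoiceRule A) :=
  (fun r : DisjRule A =>
    ChoiceRule.mk ⟨r.head, {w : Set A | w ⊆ r.head ∧ w.Nonempty}⟩
      (r.pos.toList.map (fun a => (⟨{a}, {{a}}⟩ : ChoiceAtom A)) ++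
       r.neg.toList.map (fun b => (⟨{b}, {(∅ : Set A)}⟩ : ChoiceAtom A)))) '' P

lemma sats_body_iff (r : DisjRule A) (z : Set A) :
    (∀ Ci ∈ (r.pos.toList.map (fun a => (⟨{a}, {{a}}⟩ : ChoiceAtom A)) ++
       r.neg.toList.map (fun b => (⟨{b}, {(∅ : Set A)}⟩ : ChoiceAtom A))), sats z Ci) ↔
    ((↑r.pos : Set A) ⊆ z ∧ ∀ b ∈ r.neg, b ∉ z) := by
  constructor
  · intro h
    constructor
    · intro a ha
      have := h ⟨{a}, {{a}}⟩ (by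
        simp only [List.mem_append, List.mem_map]
        exact Or.inl ⟨a, by simpa using ha, rfl⟩)
      simp only [sats, Set.mem_singleton_iff, Set.inter_eq_right] at this
      simpa using this
    · intro b hb hbz
      have := h ⟨{b}, {(∅ : Set A)}⟩ (by
        simp only [List.mem_append, List.mem_map]
        exact Or.inr ⟨b, by simpa using hb, rfl⟩)
      simp only [sats, Set.mem_singleton_iff, Set.inter_singleton_eq_empty] at this
      exact this hbz
  · rintro ⟨hpos, hneg⟩ Ci hCi
    simp only [List.mem_append, List.mem_map, Finset.mem_toList] at hCi
    rcases hCi with ⟨a, ha, rfl⟩ | ⟨b, hb, rfl⟩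
    · simp only [sats, Set.mem_singleton_iff, Set.inter_eq_right, Set.singleton_subset_iff]
      exact hpos (by simpa using ha)
    · simp only [sats, Set.mem_singleton_iff, Set.inter_singleton_eq_empty]
      exact hneg b hb

lemma hd_char (P : Set (DisjRule A)) (x y : Set A) (hxy : x ⊆ y) :
    HDmr (D2C P) x y = {C | ∃ Δ ∈ HDdl P x y,
      C = ⟨Δ, {w : Set A | w ⊆ Δ ∧ w.Nonempty}⟩} ∧
    HDlpst (D2C P) x y = {C | ∃ Δ ∈ HDdl P x y,
      C = ⟨Δ, {w : Set A | w ⊆ Δ ∧ w.Nonempty}⟩} := by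
  constructor
  · ext C
    simp only [HDmr, D2C, Set.mem_image, Set.mem_setOf_eq]
    constructor
    · rintro ⟨cr, ⟨r, hr, rfl⟩, rfl, hy, z, hzx, hz⟩
      rw [sats_body_iff] at hy hz
      exact ⟨r.head, ⟨r, hr, rfl, hz.1.trans hzx, hy.2⟩, rfl⟩
    · rintro ⟨Δ, ⟨r, hr, rfl, hpos, hneg⟩, rfl⟩
      refine ⟨_, ⟨r, hr, rfl⟩, rfl, ?_, x, le_refl x, ?_⟩
      · rw [sats_body_iff]
        exact ⟨hpos.trans hxy, hneg⟩
      · rw [sats_body_iff]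
        exact ⟨hpos, fun b hb hbx => hneg b hb (hxy hbx)⟩
  · ext C
    simp only [HDlpst, D2C, Set.mem_image, Set.mem_setOf_eq]
    constructor
    · rintro ⟨cr, ⟨r, hr, rfl⟩, rfl, hall⟩
      have hx := (sats_body_iff r x).mp (hall x (le_refl x) hxy)
      have hy := (sats_body_iff r y).mp (hall y hxy (le_refl y))
      exact ⟨r.head, ⟨r, hr, rfl, hx.1, hy.2⟩, rfl⟩
    · rintro ⟨Δ, ⟨r, hr, rfl, hpos, hneg⟩, rfl⟩
      refine ⟨_, ⟨r, hr, rfl⟩, rfl, fun z hxz hzy => ?_⟩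
      rw [sats_body_iff]
      exact ⟨hpos.trans hxz, fun b hb hbz => hneg b hb (hzy hbz)⟩

lemma icfrom_char (P : Set (DisjRule A)) (x y : Set A) :
    ICfrom {C | ∃ Δ ∈ HDdl P x y, C = ⟨Δ, {w : Set A | w ⊆ Δ ∧ w.Nonempty}⟩}
      = ICdl P x y := by
  ext z
  simp only [ICfrom, ICdl, Set.mem_setOf_eq]
  constructor
  · rintro ⟨hsub, hsat⟩
    constructor
    · intro a haz
      rcases hsub haz with ⟨s, ⟨C, rfl⟩, hs⟩
      simp only [Set.mem_iUnion, Set.mem_setOf_eq] at hs ⊢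
      obtain ⟨⟨Δ, hΔ, rfl⟩, ha⟩ := hs
      exact ⟨Δ, hΔ, ha⟩
    · intro Δ hΔ
      have := hsat _ ⟨Δ, hΔ, rfl⟩
      exact this.2
  · rintro ⟨hsub, hsat⟩
    constructor
    · intro a haz
      rcases Set.mem_iUnion₂.mp (hsub haz) with ⟨Δ, hΔ, ha⟩
      refine Set.mem_iUnion.mpr ⟨⟨Δ, {w : Set A | w ⊆ Δ ∧ w.Nonempty}⟩, ?_⟩
      simp only [Set.mem_iUnion, Set.mem_setOf_eq]
      exact ⟨⟨Δ, hΔ, rfl⟩, ha⟩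
    · rintro C ⟨Δ, hΔ, rfl⟩
      exact ⟨Set.inter_subset_right, hsat Δ hΔ⟩

/-- the lower bound of the disjunctive operator coincides with
the MR and LPST lower bounds on the translated choice program. -/
theorem disj_eq_mr_eq_lpst (P : Set (DisjRule A)) (x y : Set A) (hxy : x ⊆ y) :
    ICdl P x y = ICmrL (D2C P) x y ∧ ICmrL (D2C P) x y = IClpstL (D2C P) x y := by
  obtain ⟨h1, h2⟩ := hd_char P x y hxy
  constructor
  · rw [ICmrL, h1, icfrom_char]
  · rw [ICmrL, IClpstL, h1, h2]
end
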